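/- Let (A,η) be a contact Lie algebroid of rank 2n+1 over a smooth manifold M with Reeb section ξ, and assume ρ(ξ) = 0 as a vector field on M. For f,g ∈ C^∞(M) define {f,g} := dη(a_f,a_g), where a_f is the Hamiltonian section of f. Then {·,·} is a Poisson bracket on C^∞(M): it is ℝ-bilinear and antisymmetric, satisfies the Leibniz rule {fg,h} = f{g,h} + g{f,h} for all f,g,h ∈ C^∞(M), and satisfies the Jacobi identity {f,{g,h}} + {g,{h,f}} + {h,{f,g}} = 0. -/

import Mathlib

open Bundle
open scoped Manifold

noncomputable section

/-- The directional derivative of a real-valued function on a manifold along a tangent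
vector. (The tangent space of `ℝ` is definitionally `ℝ`.) -/
def dirDeriv {EM : Type*} [NormedAddCommGroup EM] [NormedSpace ℝ EM]
    {HM : Type*} [TopologicalSpace HM] (IM : ModelWithCorners ℝ EM HM)
    {M : Type*} [TopologicalSpace M] [ChartedSpace HM M]
    (f : M → ℝ) (p : M) (v : TangentSpace IM p) : ℝ :=
  mfderiv IM 𝓘(ℝ) f p v

section LieAlgebroid

variable {EM : Type*} [NormedAddCommGroup EM] [NormedSpace ℝ EM]
  {HM : Type*} [TopologicalSpace HM] (IM : ModelWithCorners ℝ EM HM)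
  (M : Type*) [TopologicalSpace M] [ChartedSpace HM M] [IsManifold IM (⊤ : ℕ∞) M]
  (F : Type*) [NormedAddCommGroup F] [NormedSpace ℝ F]
  (A : M → Type*) [∀ p, AddCommGroup (A p)] [∀ p, Module ℝ (A p)]
  [∀ p, TopologicalSpace (A p)] [TopologicalSpace (TotalSpace F A)]
  [FiberBundle F A] [VectorBundle ℝ F A]

/-- A set-theoretic section of the vector bundle `A` is smooth. -/
def IsSmoothSec (S : ∀ p, A p) : Prop :=
  ContMDiff IM (IM.prod 𝓘(ℝ, F)) (⊤ : ℕ∞) (fun p ↦ TotalSpace.mk' F p (S p))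

/-- A vector field on the base manifold is smooth. -/
def IsSmoothVF (X : ∀ p : M, TangentSpace IM p) : Prop :=
  ContMDiff IM IM.tangent (⊤ : ℕ∞)
    (fun p ↦ (TotalSpace.mk' EM p (X p) : TangentBundle IM M))

/-- A real-valued function on the base manifold is smooth. -/
def IsSmoothF (f : M → ℝ) : Prop := ContMDiff IM 𝓘(ℝ) (⊤ : ℕ∞) f

/-- A Lie algebroid structure on the smooth vector bundle `A` over `M`: an `ℝ`-Lie bracket
on smooth sections together with an anchor `ρ : A → TM` which is a morphism to vector
fields (expressed through the induced derivations) and satisfies the Leibniz rule. -/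
structure LieAlgebroid : Type _ where
  bracket : (∀ p, A p) → (∀ p, A p) → (∀ p, A p)
  anchor : ∀ p : M, A p →ₗ[ℝ] TangentSpace IM p
  anchor_smooth : ∀ {S}, IsSmoothSec IM M F A S →
    IsSmoothVF IM M (fun p ↦ anchor p (S p))
  bracket_smooth : ∀ {S T}, IsSmoothSec IM M F A S → IsSmoothSec IM M F A T →
    IsSmoothSec IM M F A (bracket S T)
  bracket_antisymm : ∀ {S T}, IsSmoothSec IM M F A S → IsSmoothSec IM M F A T →
    bracket S T = fun p ↦ -bracket T S p
  bracket_add_left : ∀ {S T U}, IsSmoothSec IM M F A S → IsSmoothSec IM M F A T →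
    IsSmoothSec IM M F A U →
    bracket (fun p ↦ S p + T p) U = fun p ↦ bracket S U p + bracket T U p
  bracket_smul_left : ∀ (r : ℝ) {S T}, IsSmoothSec IM M F A S → IsSmoothSec IM M F A T →
    bracket (fun p ↦ r • S p) T = fun p ↦ r • bracket S T p
  bracket_jacobi : ∀ {S T U}, IsSmoothSec IM M F A S → IsSmoothSec IM M F A T →
    IsSmoothSec IM M F A U → ∀ p,
    bracket S (bracket T U) p + bracket T (bracket U S) p + bracket U (bracket S T) p = 0
  leibniz : ∀ {S T} (f : M → ℝ), IsSmoothSec IM M F A S → IsSmoothSec IM M F A T →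
    IsSmoothF IM M f →
    bracket S (fun p ↦ f p • T p) =
      fun p ↦ f p • bracket S T p + dirDeriv IM f p (anchor p (S p)) • T p
  anchor_bracket : ∀ {S T} (f : M → ℝ), IsSmoothSec IM M F A S → IsSmoothSec IM M F A T →
    IsSmoothF IM M f → ∀ p,
    dirDeriv IM f p (anchor p (bracket S T p)) =
      dirDeriv IM (fun q ↦ dirDeriv IM f q (anchor q (T q))) p (anchor p (S p)) -
      dirDeriv IM (fun q ↦ dirDeriv IM f q (anchor q (S q))) p (anchor p (T p))


/-- Up to a positive normalization constant, the value of the `(2n+1)`-form `η ∧ Ω^n`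
on a tuple of vectors, where `η` is a linear functional and `Ω` a bilinear alternating
form. -/
def contactPairing {V : Type*} [AddCommGroup V] [Module ℝ V] (n : ℕ)
    (η : V →ₗ[ℝ] ℝ) (Ω : V →ₗ[ℝ] V →ₗ[ℝ] ℝ) (v : Fin (2 * n + 1) → V) : ℝ :=
  ∑ σ : Equiv.Perm (Fin (2 * n + 1)),
    (Equiv.Perm.sign σ : ℤ) •
      (η (v (σ ⟨0, by omega⟩)) *
        ∏ i : Fin n,
          Ω (v (σ ⟨2 * i.1 + 1, by have := i.2; omega⟩))
            (v (σ ⟨2 * i.1 + 2, by have := i.2; omega⟩)))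

variable [∀ p : M, FiniteDimensional ℝ (A p)]

/-- A contact structure on the rank-`2n+1` Lie algebroid `(A, ρ, [·,·])`: a smooth
1-form section `η` of `A*`, whose exterior differential is the (tensorial) 2-form `dη`
determined by `dη(S,T) = ρ(S)·η(T) − ρ(T)·η(S) − η([S,T])` on sections, such that
`η ∧ (dη)^n` is nowhere vanishing. -/
structure ContactForm (n : ℕ) (La : LieAlgebroid IM M F A) : Type _ where
  eta : ∀ p : M, A p →ₗ[ℝ] ℝ
  eta_smooth : ∀ {S}, IsSmoothSec IM M F A S → IsSmoothF IM M (fun p ↦ eta p (S p))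
  rank_eq : ∀ p : M, Module.finrank ℝ (A p) = 2 * n + 1
  deta : ∀ p : M, A p →ₗ[ℝ] A p →ₗ[ℝ] ℝ
  deta_alt : ∀ (p : M) (v : A p), deta p v v = 0
  deta_eq : ∀ {S T}, IsSmoothSec IM M F A S → IsSmoothSec IM M F A T → ∀ p : M,
    deta p (S p) (T p) =
      dirDeriv IM (fun q ↦ eta q (T q)) p (La.anchor p (S p)) -
        dirDeriv IM (fun q ↦ eta q (S q)) p (La.anchor p (T p)) -
        eta p (La.bracket S T p)
  contact : ∀ p : M, ∃ v : Fin (2 * n + 1) → A p,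
    contactPairing n (eta p) (deta p) v ≠ 0

/-- `ξ` is the Reeb section of the contact Lie algebroid: `η(ξ) = 1`, `i_ξ dη = 0`. -/
def IsReebSec (n : ℕ) (La : LieAlgebroid IM M F A) (C : ContactForm IM M F A n La)
    (ξ : ∀ p : M, A p) : Prop :=
  IsSmoothSec IM M F A ξ ∧ (∀ p : M, C.eta p (ξ p) = 1) ∧
    ∀ (p : M) (w : A p), C.deta p (ξ p) w = 0

/-- `a` is the Hamiltonian section of `f ∈ C^∞(M)` on a contact Lie algebroid with Reeb
section `ξ`: `a` is smooth, `η(a) = 0`, and `dη(a, b) = ρ(b)·f − (ρ(ξ)·f)·η(b)` for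
every `b`. -/
def IsHamiltonianSec (n : ℕ) (La : LieAlgebroid IM M F A)
    (C : ContactForm IM M F A n La) (ξ : ∀ p : M, A p)
    (f : M → ℝ) (a : ∀ p : M, A p) : Prop :=
  IsSmoothSec IM M F A a ∧ (∀ p : M, C.eta p (a p) = 0) ∧
    ∀ (p : M) (w : A p), C.deta p (a p) w =
      dirDeriv IM f p (La.anchor p w) -
        dirDeriv IM f p (La.anchor p (ξ p)) * C.eta p w

lemma aux_cont_snd : ContMDiff 𝓘(ℝ).tangent 𝓘(ℝ) (⊤ : ℕ∞) (fun w : TangentBundle 𝓘(ℝ) ℝ ↦ (w.2 : ℝ)) := by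
  refine contMDiff_iff.2 ⟨continuous_snd.comp (tangentBundleModelSpaceHomeomorph 𝓘(ℝ)).continuous, ?_⟩
  intro x y
  simp only [mfld_simps]
  exact contDiff_snd.contDiffOn

lemma aux_smooth_dirDeriv {g : M → ℝ} (hg : IsSmoothF IM M g)
    {X : ∀ p : M, TangentSpace IM p} (hX : IsSmoothVF IM M X) :
    IsSmoothF IM M (fun p ↦ dirDeriv IM g p (X p)) := by
  have h1 : ContMDiff IM.tangent 𝓘(ℝ).tangent (⊤ : ℕ∞) (tangentMap IM 𝓘(ℝ) g) :=
    hg.contMDiff_tangentMap (by exact_mod_cast (le_top : (⊤ : ℕ∞) + 1 ≤ ⊤))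
  exact aux_cont_snd.comp (h1.comp hX)

lemma aux_deta_antisymm {n : ℕ} {La : LieAlgebroid IM M F A}
    (C : ContactForm IM M F A n La) (p : M) (v w : A p) :
    C.deta p v w = - C.deta p w v := by
  have h := C.deta_alt p (v + w)
  simp only [map_add, LinearMap.add_apply, C.deta_alt p v, C.deta_alt p w] at h
  linarith

/-- Let `(A, η)` be a contact Lie algebroid of rank `2n+1` with Reeb
section `ξ` satisfying `ρ(ξ) = 0`. Then `{f, g} := dη(a_f, a_g)` (where `a_f` is the
Hamiltonian section of `f`) is a Poisson bracket on `C^∞(M)`: it is `ℝ`-bilinear,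
antisymmetric, satisfies the Leibniz rule and the Jacobi identity. -/
theorem stmt10 (n : ℕ) (La : LieAlgebroid IM M F A) (C : ContactForm IM M F A n La)
    (ξ : ∀ p : M, A p) (hξ : IsReebSec IM M F A n La C ξ)
    (hρξ : ∀ p : M, La.anchor p (ξ p) = 0)
    (ham : (M → ℝ) → ∀ p : M, A p)
    (hham : ∀ f : M → ℝ, IsSmoothF IM M f → IsHamiltonianSec IM M F A n La C ξ f (ham f))
    (PB : (M → ℝ) → (M → ℝ) → M → ℝ)
    (hPB : ∀ (f g : M → ℝ) (p : M), PB f g p = C.deta p (ham f p) (ham g p)) :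
    -- `ℝ`-bilinearity
    (∀ f₁ f₂ g : M → ℝ, IsSmoothF IM M f₁ → IsSmoothF IM M f₂ → IsSmoothF IM M g →
      ∀ p : M, PB (fun q ↦ f₁ q + f₂ q) g p = PB f₁ g p + PB f₂ g p) ∧
    (∀ (r : ℝ) (f g : M → ℝ), IsSmoothF IM M f → IsSmoothF IM M g →
      ∀ p : M, PB (fun q ↦ r * f q) g p = r * PB f g p) ∧
    (∀ f g₁ g₂ : M → ℝ, IsSmoothF IM M f → IsSmoothF IM M g₁ → IsSmoothF IM M g₂ →
      ∀ p : M, PB f (fun q ↦ g₁ q + g₂ q) p = PB f g₁ p + PB f g₂ p) ∧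
    (∀ (r : ℝ) (f g : M → ℝ), IsSmoothF IM M f → IsSmoothF IM M g →
      ∀ p : M, PB f (fun q ↦ r * g q) p = r * PB f g p) ∧
    -- antisymmetry
    (∀ f g : M → ℝ, IsSmoothF IM M f → IsSmoothF IM M g →
      ∀ p : M, PB f g p = -PB g f p) ∧
    -- Leibniz rule
    (∀ f g h : M → ℝ, IsSmoothF IM M f → IsSmoothF IM M g → IsSmoothF IM M h →
      ∀ p : M, PB (fun q ↦ f q * g q) h p = f p * PB g h p + g p * PB f h p) ∧
    -- Jacobi identity
    (∀ f g h : M → ℝ, IsSmoothF IM M f → IsSmoothF IM M g → IsSmoothF IM M h →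
      ∀ p : M, PB f (PB g h) p + PB g (PB h f) p + PB h (PB f g) p = 0) := by
  obtain ⟨hξsm, hξeta, hξdeta⟩ := hξ
  have hsec : ∀ (f : M → ℝ), IsSmoothF IM M f → IsSmoothSec IM M F A (ham f) :=
    fun f hf ↦ (hham f hf).1
  have heta0 : ∀ (f : M → ℝ), IsSmoothF IM M f → ∀ p, C.eta p (ham f p) = 0 :=
    fun f hf ↦ (hham f hf).2.1
  have hmd : ∀ (f : M → ℝ), IsSmoothF IM M f → ∀ p : M, MDifferentiableAt IM 𝓘(ℝ) f p :=
    fun f hf p ↦ (hf p).mdifferentiableAt (by simp)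
  have factA : ∀ (f : M → ℝ), IsSmoothF IM M f → ∀ (p : M) (w : A p),
      C.deta p (ham f p) w = dirDeriv IM f p (La.anchor p w) := by
    intro f hf p w
    have h := (hham f hf).2.2 p w
    have hz : dirDeriv IM f p (La.anchor p (ξ p)) = 0 := by
      rw [hρξ p]; simp [dirDeriv]; rfl
    rw [h, hz]; ring
  have factB : ∀ (f g : M → ℝ), IsSmoothF IM M f → ∀ p : M,
      PB f g p = dirDeriv IM f p (La.anchor p (ham g p)) := by
    intro f g hf p; rw [hPB]; exact factA f hf p _
  have factB' : ∀ (f g : M → ℝ), IsSmoothF IM M g → ∀ p : M,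
      PB f g p = - dirDeriv IM g p (La.anchor p (ham f p)) := by
    intro f g hg p
    rw [hPB, aux_deta_antisymm IM M F A C p, factA g hg p]
  have hXsm : ∀ (f : M → ℝ), IsSmoothF IM M f →
      IsSmoothVF IM M (fun p ↦ La.anchor p (ham f p)) :=
    fun f hf ↦ La.anchor_smooth (hsec f hf)
  have hPBsm : ∀ (f g : M → ℝ), IsSmoothF IM M f → IsSmoothF IM M g →
      IsSmoothF IM M (PB f g) := by
    intro f g hf hg
    have e : PB f g = fun p ↦ dirDeriv IM f p (La.anchor p (ham g p)) :=
      funext (factB f g hf)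
    rw [e]
    exact aux_smooth_dirDeriv IM M hf (hXsm g hg)
  -- derivative of a constant-zero family
  have dzero : ∀ (F₀ : M → ℝ), (∀ q, F₀ q = 0) → ∀ (p : M) (v : TangentSpace IM p),
      dirDeriv IM F₀ p v = 0 := by
    intro F₀ hF p v
    have : F₀ = fun _ ↦ (0 : ℝ) := funext hF
    rw [this]
    simp [dirDeriv]; rfl
  -- negation under dirDeriv
  have dneg : ∀ (F₁ F₂ : M → ℝ), (∀ q, F₁ q = - F₂ q) → ∀ (p : M) (v : TangentSpace IM p),
      dirDeriv IM F₁ p v = - dirDeriv IM F₂ p v := by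
    intro F₁ F₂ hF p v
    have : F₁ = -F₂ := funext hF
    rw [this]
    simp only [dirDeriv, mfderiv_neg]
    rfl
  refine ⟨?_, ?_, ?_, ?_, ?_, ?_, ?_⟩
  · -- add left
    intro f₁ f₂ g hf1 hf2 hg p
    have hsum : IsSmoothF IM M (fun q ↦ f₁ q + f₂ q) := hf1.add hf2
    rw [factB _ g hsum p, factB _ g hf1 p, factB _ g hf2 p]
    simp only [dirDeriv]
    rw [show (fun q ↦ f₁ q + f₂ q) = f₁ + f₂ from rfl,
      ((hmd f₁ hf1 p).hasMFDerivAt.add (hmd f₂ hf2 p).hasMFDerivAt).mfderiv]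
    rfl
  · -- smul left
    intro r f g hf hg p
    have hs : IsSmoothF IM M (fun q ↦ r * f q) := contMDiff_const.mul hf
    rw [factB _ g hs p, factB f g hf p]
    simp only [dirDeriv]
    rw [show (fun q ↦ r * f q) = r • f from rfl,
      ((hmd f hf p).hasMFDerivAt.const_smul r).mfderiv]
    rfl
  · -- add right
    intro f g₁ g₂ hf hg1 hg2 p
    have hsum : IsSmoothF IM M (fun q ↦ g₁ q + g₂ q) := hg1.add hg2
    rw [factB' f _ hsum p, factB' f g₁ hg1 p, factB' f g₂ hg2 p]
    simp only [dirDeriv]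
    rw [show (fun q ↦ g₁ q + g₂ q) = g₁ + g₂ from rfl,
      ((hmd g₁ hg1 p).hasMFDerivAt.add (hmd g₂ hg2 p).hasMFDerivAt).mfderiv]
    exact (neg_add _ _).trans rfl
  · -- smul right
    intro r f g hf hg p
    have hs : IsSmoothF IM M (fun q ↦ r * g q) := contMDiff_const.mul hg
    rw [factB' f _ hs p, factB' f g hg p]
    simp only [dirDeriv]
    rw [show (fun q ↦ r * g q) = r • g from rfl,
      ((hmd g hg p).hasMFDerivAt.const_smul r).mfderiv]
    exact (mul_neg r _).symm
  · -- antisymmetry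
    intro f g hf hg p
    rw [hPB, hPB, aux_deta_antisymm IM M F A C p]
  · -- Leibniz
    intro f g h hf hg hh p
    have hfg : IsSmoothF IM M (fun q ↦ f q * g q) := hf.mul hg
    rw [factB _ h hfg p, factB g h hg p, factB f h hf p]
    simp only [dirDeriv]
    rw [show (fun q ↦ f q * g q) = f * g from rfl,
      ((hmd f hf p).hasMFDerivAt.mul (hmd g hg p).hasMFDerivAt).mfderiv]
    rfl
  · -- Jacobi
    intro f g h hf hg hh p
    -- η of the iterated bracket
    have key : ∀ (a b c : M → ℝ), IsSmoothF IM M a → IsSmoothF IM M b → IsSmoothF IM M c →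
        C.eta p (La.bracket (ham a) (La.bracket (ham b) (ham c)) p)
          = dirDeriv IM (fun q ↦ dirDeriv IM c q (La.anchor q (ham b q))) p
              (La.anchor p (ham a p))
            - (dirDeriv IM (fun q ↦ dirDeriv IM a q (La.anchor q (ham c q))) p
                (La.anchor p (ham b p))
              - dirDeriv IM (fun q ↦ dirDeriv IM a q (La.anchor q (ham b q))) p
                (La.anchor p (ham c p))) := by
      intro a b c ha hb hc
      set B := La.bracket (ham b) (ham c) with hBdef
      have hB : IsSmoothSec IM M F A B := La.bracket_smooth (hsec b hb) (hsec c hc)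
      have hetaB : ∀ q, C.eta q (B q) = dirDeriv IM c q (La.anchor q (ham b q)) := by
        intro q
        have hd := C.deta_eq (hsec b hb) (hsec c hc) q
        rw [dzero _ (heta0 c hc) q _, dzero _ (heta0 b hb) q _] at hd
        have h1 : C.deta q (ham b q) (ham c q)
            = - dirDeriv IM c q (La.anchor q (ham b q)) := by
          rw [aux_deta_antisymm IM M F A C q, factA c hc q]
        rw [h1] at hd
        linarith
      have hd2 := C.deta_eq (hsec a ha) hB p
      rw [dzero _ (heta0 a ha) p _] at hd2
      have hfun : (fun q ↦ C.eta q (B q))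
          = fun q ↦ dirDeriv IM c q (La.anchor q (ham b q)) := funext hetaB
      rw [hfun] at hd2
      have h2 : C.deta p (ham a p) (B p) = dirDeriv IM a p (La.anchor p (B p)) :=
        factA a ha p (B p)
      have h3 := La.anchor_bracket a (hsec b hb) (hsec c hc) ha p
      rw [← hBdef] at h3
      linarith [hd2, h2, h3]
    -- the three values of the nested brackets
    have hval : ∀ (a b c : M → ℝ), IsSmoothF IM M a → IsSmoothF IM M b → IsSmoothF IM M c →
        PB a (PB b c) p
          = dirDeriv IM (fun q ↦ dirDeriv IM c q (La.anchor q (ham b q))) p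
              (La.anchor p (ham a p)) := by
      intro a b c ha hb hc
      have hbc := hPBsm b c hb hc
      rw [factB' a (PB b c) hbc p]
      have := dneg (PB b c) (fun q ↦ dirDeriv IM c q (La.anchor q (ham b q)))
        (fun q ↦ factB' b c hc q) p (La.anchor p (ham a p))
      rw [this]
      ring
    -- antisymmetry of the first-order terms as functions
    have dAnti : ∀ (a b : M → ℝ), IsSmoothF IM M a → IsSmoothF IM M b →
        ∀ (v : TangentSpace IM p),
        dirDeriv IM (fun q ↦ dirDeriv IM a q (La.anchor q (ham b q))) p v
          = - dirDeriv IM (fun q ↦ dirDeriv IM b q (La.anchor q (ham a q))) p v := by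
      intro a b ha hb v
      refine dneg _ _ (fun q ↦ ?_) p v
      have h1 := factB a b ha q
      have h2 := factB' a b hb q
      rw [h1] at h2
      linarith
    have hJ := La.bracket_jacobi (hsec f hf) (hsec g hg) (hsec h hh) p
    have hetaJ := congrArg (C.eta p) hJ
    simp only [map_add, map_zero] at hetaJ
    rw [key f g h hf hg hh, key g h f hg hh hf, key h f g hh hf hg] at hetaJ
    rw [hval f g h hf hg hh, hval g h f hg hh hf, hval h f g hh hf hg]
    have a1 := dAnti f g hf hg (La.anchor p (ham h p))
    have a2 := dAnti g h hg hh (La.anchor p (ham f p))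
    have a3 := dAnti h f hh hf (La.anchor p (ham g p))
    linarith


end LieAlgebroid
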